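/- Let $m > 2$ and let $d, \delta_1, \ldots, \delta_m$ be nonnegative real numbers with $d = \sum_{i=1}^m \delta_i$, and set $d' = \sum_{i=2}^{m-1} \delta_i$. Then $\sum_{i<j} \delta_i \delta_j \leq \frac{1}{4}(d+d')^2 - \frac{m-1}{2(m-2)} d'^2$. -/

import Mathlib

theorem expand_aux (m : ℕ) (δ : Fin m → ℝ) :
    (∑ i, δ i)^2 = 2*(∑ i : Fin m, ∑ j : Fin m, if i < j then δ i * δ j else 0) + ∑ i, δ i^2 := by
  have h1 : (∑ i, δ i)^2 = ∑ i : Fin m, ∑ j : Fin m, δ i * δ j := by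
    rw [sq, Finset.sum_mul_sum]
  have h2 : ∀ i j : Fin m, δ i * δ j =
      (if i < j then δ i * δ j else 0) + (if j < i then δ i * δ j else 0)
        + (if i = j then δ i * δ j else 0) := by
    intro i j
    rcases lt_trichotomy i j with h | h | h
    · rw [if_pos h, if_neg (asymm h), if_neg h.ne]; ring
    · subst h; simp
    · rw [if_neg (asymm h), if_pos h, if_neg h.ne']; ring
  rw [h1]
  have h2' : (∑ i : Fin m, ∑ j : Fin m, δ i * δ j)
      = ∑ i : Fin m, ∑ j : Fin m, ((if i < j then δ i * δ j else 0)
        + (if j < i then δ i * δ j else 0) + (if i = j then δ i * δ j else 0)) :=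
    Finset.sum_congr rfl fun i _ => Finset.sum_congr rfl fun j _ => h2 i j
  rw [h2']
  simp_rw [Finset.sum_add_distrib]
  have h3 : (∑ i : Fin m, ∑ j : Fin m, if j < i then δ i * δ j else 0)
      = ∑ i : Fin m, ∑ j : Fin m, if i < j then δ i * δ j else 0 := by
    rw [Finset.sum_comm]
    congr 1; ext i; congr 1; ext j
    rcases lt_or_ge i j with h | h
    · simp [h, mul_comm]
    · simp [not_lt.2 h]
  have h4 : (∑ i : Fin m, ∑ j : Fin m, if i = j then δ i * δ j else 0) = ∑ i, δ i ^ 2 := by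
    congr 1; ext i
    simp [Finset.sum_ite_eq, sq]
  rw [h3, h4]; ring

theorem stmt2 (m : ℕ) (hm : 2 < m) (d d' : ℝ) (δ : Fin m → ℝ)
    (hδ : ∀ i, 0 ≤ δ i) (hd : d = ∑ i, δ i)
    (hd' : d' = ∑ i : Fin m, if 0 < (i : ℕ) ∧ (i : ℕ) < m - 1 then δ i else 0) :
    (∑ i : Fin m, ∑ j : Fin m, if i < j then δ i * δ j else 0) ≤
      (1 / 4) * (d + d') ^ 2 - ((m : ℝ) - 1) / (2 * ((m : ℝ) - 2)) * d' ^ 2 := by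
  classical
  set c0 : Fin m := ⟨0, by omega⟩ with hc0
  set c1 : Fin m := ⟨m - 1, by omega⟩ with hc1
  set s : Finset (Fin m) := Finset.univ.filter (fun i => 0 < (i : ℕ) ∧ (i : ℕ) < m - 1) with hs
  have hcompl : Finset.univ \ s = {c0, c1} := by
    ext i
    simp only [Finset.mem_sdiff, Finset.mem_univ, hs, Finset.mem_filter, true_and,
      Finset.mem_insert, Finset.mem_singleton, Fin.ext_iff, hc0, hc1, Fin.val_mk]
    have := i.isLt
    omega
  have hne : c0 ≠ c1 := Fin.ne_of_val_ne (by show (0:ℕ) ≠ m - 1; omega)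
  have h2 : ({c0, c1} : Finset (Fin m)).card = 2 := by
    rw [Finset.card_insert_of_notMem (by simp [hne]), Finset.card_singleton]
  have hle : s.card ≤ m := by simpa using Finset.card_le_univ s
  have h3 : m - s.card = 2 := by
    have := congrArg Finset.card hcompl
    rwa [Finset.card_sdiff_of_subset (Finset.subset_univ s), h2, Finset.card_univ, Fintype.card_fin] at this
  have hcardn : s.card = m - 2 := by omega
  have hcard : (s.card : ℝ) = (m : ℝ) - 2 := by
    rw [hcardn]
    push_cast [Nat.cast_sub (by omega : 2 ≤ m)]
    ring
  -- d' as filtered sum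
  have hd'2 : d' = ∑ i ∈ s, δ i := by rw [hd', Finset.sum_filter]
  -- split d
  have hsplit : ∀ f : Fin m → ℝ, ∑ i, f i = (∑ i ∈ s, f i) + f c0 + f c1 := by
    intro f
    rw [← Finset.sum_sdiff (Finset.subset_univ s), hcompl,
      Finset.sum_insert (by simp [hne]), Finset.sum_singleton]
    ring
  have hdsplit : d = d' + δ c0 + δ c1 := by rw [hd, hsplit, hd'2]
  have hSsplit : ∑ i, (δ i)^2 = (∑ i ∈ s, (δ i)^2) + (δ c0)^2 + (δ c1)^2 := hsplit _
  have hcauchy : d' ^ 2 ≤ ((m : ℝ) - 2) * ∑ i ∈ s, (δ i)^2 := by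
    rw [hd'2, ← hcard]
    have := sq_sum_le_card_mul_sum_sq (s := s) (f := δ)
    exact_mod_cast this
  have hexp := expand_aux m δ
  rw [← hd] at hexp
  have hk : (0:ℝ) < (m:ℝ) - 2 := by
    have : (2:ℝ) < m := by exact_mod_cast hm
    linarith
  rw [le_sub_iff_add_le, div_mul_eq_mul_div, add_comm, ← le_sub_iff_add_le,
    div_le_iff₀ (by linarith : (0:ℝ) < 2 * ((m:ℝ) - 2))]
  set k : ℝ := (m:ℝ) - 2 with hkdef
  set a : ℝ := δ c0
  set b : ℝ := δ c1
  set Sin : ℝ := ∑ i ∈ s, δ i ^ 2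
  rw [hSsplit] at hexp
  have hexpk : k * d ^ 2 = k * ((2 * ∑ i : Fin m, ∑ j : Fin m, if i < j then δ i * δ j else 0)
      + (Sin + a ^ 2 + b ^ 2)) := by linear_combination k * hexp
  have hd2k : k * d ^ 2 = k * (d' + a + b) ^ 2 := by rw [hdsplit]
  have hddk : k * (d + d') ^ 2 = k * (2 * d' + a + b) ^ 2 := by rw [hdsplit]; ring
  nlinarith [hexpk, hd2k, hddk, hcauchy, mul_nonneg hk.le (sq_nonneg (a - b))]
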